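/- Let proj_{ij} denote the projection through a cell: for p on the entry side of a unit cell, proj_{ij}(p) is the set of points q on the exit side such that the slope of the segment pq lies in [minS_{ij}, maxS_{ij}] where 0 ≤ minS_{ij} ≤ maxS_{ij}. If I₁ ≼ I₂ ≼ ⋯ ≼ I_k is a sequence of intervals on the entry side ordered by the relation I ≼ J iff Left(I) ≼ Left(J) and Right(I) ≼ Right(J), then their projections satisfy proj_{ij}(I₁) ≼ proj_{ij}(I₂) ≼ ⋯ ≼ proj_{ij}(I_k). -/

import Mathlib

open Set

/-- Strict "before" order on points of the plane: `p ≺ q` iff `p.x < q.x`, or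
`p.x = q.x` and `p.y > q.y`. -/
def plex (p q : ℝ × ℝ) : Prop := p.1 < q.1 ∨ (p.1 = q.1 ∧ q.2 < p.2)

/-- "Before or equal" order on points of the plane. -/
def pleq (p q : ℝ × ℝ) : Prop := plex p q ∨ p = q

/-- The entry side of the unit cell `[0,1]²`: its left and bottom edges. -/
def entrySide : Set (ℝ × ℝ) := ({(0:ℝ)} ×ˢ Icc (0:ℝ) 1) ∪ (Icc (0:ℝ) 1 ×ˢ {(0:ℝ)})

/-- The exit side of the unit cell `[0,1]²`: its top and right edges. -/
def exitSide : Set (ℝ × ℝ) := (Icc (0:ℝ) 1 ×ˢ {(1:ℝ)}) ∪ ({(1:ℝ)} ×ˢ Icc (0:ℝ) 1)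

/-- The projection of an entry-side point `p` through the cell: exit-side points `q` such that
the slope of the segment `pq` lies in `[σmin, σmax]` (expressed multiplicatively). -/
def projCell (σmin σmax : ℝ) (p : ℝ × ℝ) : Set (ℝ × ℝ) :=
  {q ∈ exitSide | p.1 ≤ q.1 ∧ p.2 ≤ q.2 ∧
    σmin * (q.1 - p.1) ≤ q.2 - p.2 ∧ q.2 - p.2 ≤ σmax * (q.1 - p.1)}

/-- The projection of a set of entry-side points. -/
def projSet (σmin σmax : ℝ) (S : Set (ℝ × ℝ)) : Set (ℝ × ℝ) :=
  ⋃ p ∈ S, projCell σmin σmax p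

/-- projecting a `≼`-ordered sequence of intervals on the entry side of a cell
through the cell preserves the interval order `I ≼ J ↔ Left(I) ≼ Left(J) ∧ Right(I) ≼ Right(J)`
on the exit side. -/
lemma entry_facts {p : ℝ × ℝ} (hp : p ∈ entrySide) :
    0 ≤ p.1 ∧ p.1 ≤ 1 ∧ 0 ≤ p.2 ∧ p.2 ≤ 1 ∧ (p.1 = 0 ∨ p.2 = 0) := by
  simp only [entrySide, mem_union, mem_prod, mem_singleton_iff, mem_Icc] at hp
  rcases hp with ⟨h1, h2, h3⟩ | ⟨⟨h2, h3⟩, h1⟩ <;>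
    refine ⟨by simp [h1, h2, h3], by simp [h1, h2, h3], by simp [h1, h2, h3],
      by simp [h1, h2, h3], by tauto⟩

lemma exit_facts {q : ℝ × ℝ} (hq : q ∈ exitSide) :
    0 ≤ q.1 ∧ q.1 ≤ 1 ∧ 0 ≤ q.2 ∧ q.2 ≤ 1 ∧ (q.1 = 1 ∨ q.2 = 1) := by
  simp only [exitSide, mem_union, mem_prod, mem_singleton_iff, mem_Icc] at hq
  rcases hq with ⟨⟨h2, h3⟩, h1⟩ | ⟨h1, h2, h3⟩ <;>
    refine ⟨by simp [h1, h2, h3], by simp [h1, h2, h3], by simp [h1, h2, h3],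
      by simp [h1, h2, h3], by tauto⟩

lemma pleq_iff_entry {p q : ℝ × ℝ} (hp : p ∈ entrySide) (hq : q ∈ entrySide) :
    pleq p q ↔ p.1 - p.2 ≤ q.1 - q.2 := by
  obtain ⟨hp1, hp2, hp3, hp4, hp5⟩ := entry_facts hp
  obtain ⟨hq1, hq2, hq3, hq4, hq5⟩ := entry_facts hq
  constructor
  · rintro (hpl | rfl)
    · rcases hpl with h | ⟨h1, h2⟩
      · rcases hq5 with h' | h'
        · exfalso; rw [h'] at h; linarith
        · linarith
      · linarith
    · linarith
  · intro h
    rcases lt_trichotomy p.1 q.1 with h1 | h1 | h1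
    · exact Or.inl (Or.inl h1)
    · rcases lt_or_eq_of_le (by linarith : q.2 ≤ p.2) with h2 | h2
      · exact Or.inl (Or.inr ⟨h1, h2⟩)
      · exact Or.inr (Prod.ext h1 h2.symm)
    · exfalso
      rcases hp5 with h' | h' <;> [linarith; skip]
      rw [h'] at h; linarith

lemma pleq_iff_exit {p q : ℝ × ℝ} (hp : p ∈ exitSide) (hq : q ∈ exitSide) :
    pleq p q ↔ p.1 - p.2 ≤ q.1 - q.2 := by
  obtain ⟨hp1, hp2, hp3, hp4, hp5⟩ := exit_facts hp
  obtain ⟨hq1, hq2, hq3, hq4, hq5⟩ := exit_facts hq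
  constructor
  · rintro (hpl | rfl)
    · rcases hpl with h | ⟨h1, h2⟩
      · rcases hp5 with h' | h'
        · exfalso; rw [h'] at h; linarith
        · linarith
      · linarith
    · linarith
  · intro h
    rcases lt_trichotomy p.1 q.1 with h1 | h1 | h1
    · exact Or.inl (Or.inl h1)
    · rcases lt_or_eq_of_le (by linarith : q.2 ≤ p.2) with h2 | h2
      · exact Or.inl (Or.inr ⟨h1, h2⟩)
      · exact Or.inr (Prod.ext h1 h2.symm)
    · exfalso
      rcases hq5 with h' | h' <;> [linarith; skip]
      rw [h'] at h; linarith

lemma projCell_mem {σmin σmax : ℝ} {p q : ℝ × ℝ} :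
    q ∈ projCell σmin σmax p ↔ q ∈ exitSide ∧ p.1 ≤ q.1 ∧ p.2 ≤ q.2 ∧
      σmin * (q.1 - p.1) ≤ q.2 - p.2 ∧ q.2 - p.2 ≤ σmax * (q.1 - p.1) := Iff.rfl

lemma top_mem_exit {x : ℝ} (h0 : 0 ≤ x) (h1 : x ≤ 1) : ((x, (1:ℝ)) : ℝ × ℝ) ∈ exitSide :=
  Or.inl ⟨⟨h0, h1⟩, rfl⟩

lemma right_mem_exit {y : ℝ} (h0 : 0 ≤ y) (h1 : y ≤ 1) : (((1:ℝ), y) : ℝ × ℝ) ∈ exitSide :=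
  Or.inr ⟨rfl, h0, h1⟩

/-- Monotonicity of `σ * x - y` along the entry side, w.r.t. `x - y`. -/
lemma g_mono {σ : ℝ} (hσ : 0 ≤ σ) {p p' : ℝ × ℝ} (hp : p ∈ entrySide) (hp' : p' ∈ entrySide)
    (hf : p.1 - p.2 ≤ p'.1 - p'.2) : σ * p.1 - p.2 ≤ σ * p'.1 - p'.2 := by
  obtain ⟨hp1, hp2, hp3, hp4, hp5⟩ := entry_facts hp
  obtain ⟨hq1, hq2, hq3, hq4, hq5⟩ := entry_facts hp'
  rcases hp5 with h | h <;> rcases hq5 with h' | h' <;>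
    nlinarith [mul_nonneg hσ hp1, mul_nonneg hσ hq1, mul_nonneg hσ hp3, mul_nonneg hσ hq3,
      mul_le_mul_of_nonneg_left hf hσ, h, h']

/-- The leftmost point of the projection of `p`: shoot a ray of slope `σmax`. -/
noncomputable def leftPt (σmax : ℝ) (p : ℝ × ℝ) : ℝ × ℝ :=
  if 1 - p.2 ≤ σmax * (1 - p.1) then (p.1 + (1 - p.2) / σmax, 1)
  else (1, p.2 + σmax * (1 - p.1))

/-- The rightmost point of the projection of `p`: shoot a ray of slope `σmin`. -/
noncomputable def rightPt (σmin : ℝ) (p : ℝ × ℝ) : ℝ × ℝ :=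
  if σmin * (1 - p.1) ≤ 1 - p.2 then (1, p.2 + σmin * (1 - p.1))
  else (p.1 + (1 - p.2) / σmin, 1)

lemma leftPt_mem {σmin σmax : ℝ} (h0 : 0 ≤ σmin) (h1 : σmin ≤ σmax) {p : ℝ × ℝ}
    (hp : p ∈ entrySide) : leftPt σmax p ∈ projCell σmin σmax p := by
  obtain ⟨hp1, hp2, hp3, hp4, _⟩ := entry_facts hp
  have hσ : 0 ≤ σmax := h0.trans h1
  rw [leftPt]
  split_ifs with hc
  · rcases hσ.eq_or_lt with hσ0 | hσ0
    · -- σmax = 0; then p.2 = 1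
      have hp2' : p.2 = 1 := by nlinarith
      rw [projCell_mem]
      have ht : (1 - p.2) / σmax = 0 := by rw [hp2']; simp
      refine ⟨top_mem_exit (by simp [ht, hp1]) (by simp [ht]; nlinarith), ?_, ?_, ?_, ?_⟩ <;>
        simp [ht, hp2', ← hσ0]
    · have ht : σmax * ((1 - p.2) / σmax) = 1 - p.2 := by field_simp
      have ht0 : 0 ≤ (1 - p.2) / σmax := div_nonneg (by linarith) hσ
      have ht1 : (1 - p.2) / σmax ≤ 1 - p.1 := by
        rw [div_le_iff₀ hσ0]; nlinarith
      rw [projCell_mem]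
      dsimp only
      refine ⟨top_mem_exit (by linarith) (by linarith), by linarith, by linarith, ?_, ?_⟩
      · nlinarith [mul_le_mul_of_nonneg_right h1 ht0]
      · nlinarith
  · push_neg at hc
    have ha : 0 ≤ 1 - p.1 := by linarith
    have hb : 0 ≤ σmax * (1 - p.1) := mul_nonneg hσ ha
    rw [projCell_mem]
    dsimp only
    refine ⟨right_mem_exit (by linarith) (by linarith), by linarith, by linarith, ?_, ?_⟩
    · nlinarith [mul_le_mul_of_nonneg_right h1 ha]
    · nlinarith

lemma rightPt_mem {σmin σmax : ℝ} (h0 : 0 ≤ σmin) (h1 : σmin ≤ σmax) {p : ℝ × ℝ}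
    (hp : p ∈ entrySide) : rightPt σmin p ∈ projCell σmin σmax p := by
  obtain ⟨hp1, hp2, hp3, hp4, _⟩ := entry_facts hp
  rw [rightPt]
  split_ifs with hc
  · have ha : 0 ≤ 1 - p.1 := by linarith
    have hb : 0 ≤ σmin * (1 - p.1) := mul_nonneg h0 ha
    rw [projCell_mem]
    dsimp only
    refine ⟨right_mem_exit (by linarith) (by linarith), by linarith, by linarith, ?_, ?_⟩
    · nlinarith
    · nlinarith [mul_le_mul_of_nonneg_right h1 ha]
  · push_neg at hc
    have hσ0 : 0 < σmin := by
      rcases h0.eq_or_lt with h | h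
      · exfalso; rw [← h] at hc; nlinarith
      · exact h
    have ht : σmin * ((1 - p.2) / σmin) = 1 - p.2 := by field_simp
    have ht0 : 0 ≤ (1 - p.2) / σmin := div_nonneg (by linarith) h0
    have ht1 : (1 - p.2) / σmin ≤ 1 - p.1 := by
      rw [div_le_iff₀ hσ0]; nlinarith
    rw [projCell_mem]
    dsimp only
    refine ⟨top_mem_exit (by linarith) (by linarith), by linarith, by linarith, ?_, ?_⟩
    · nlinarith
    · nlinarith [mul_le_mul_of_nonneg_right h1 ht0]

/-- Key lower-bound lemma: if `p ≼ p'` on the entry side, then the left point of `p`'s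
projection is `≼` every point of the projection of `p'`. -/
lemma leftPt_le {σmin σmax : ℝ} (h0 : 0 ≤ σmin) (h1 : σmin ≤ σmax) {p p' q' : ℝ × ℝ}
    (hp : p ∈ entrySide) (hp' : p' ∈ entrySide) (hf : p.1 - p.2 ≤ p'.1 - p'.2)
    (hq' : q' ∈ projCell σmin σmax p') :
    (leftPt σmax p).1 - (leftPt σmax p).2 ≤ q'.1 - q'.2 := by
  obtain ⟨hp1, hp2, hp3, hp4, _⟩ := entry_facts hp
  obtain ⟨hq1, hq2, hq3, hq4, _⟩ := entry_facts hp'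
  have hσ : 0 ≤ σmax := h0.trans h1
  rw [projCell_mem] at hq'
  obtain ⟨hqe, hx, hy, hs1, hs2⟩ := hq'
  obtain ⟨he1, he2, he3, he4, he5⟩ := exit_facts hqe
  have hg : σmax * p.1 - p.2 ≤ σmax * p'.1 - p'.2 := g_mono hσ hp hp' hf
  rw [leftPt]
  split_ifs with hc
  · rcases hσ.eq_or_lt with hσ0 | hσ0
    · have hp2' : p.2 = 1 := by nlinarith
      have ht : (1 - p.2) / σmax = 0 := by rw [hp2']; simp
      simp only [ht, add_zero]
      -- goal: p.1 - 1 ≤ q'.1 - q'.2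
      rw [← hσ0, zero_mul] at hs2
      linarith
    · have ht : σmax * ((1 - p.2) / σmax) = 1 - p.2 := by field_simp
      have ht1 : (1 - p.2) / σmax ≤ 1 - p.1 := by
        rw [div_le_iff₀ hσ0]; nlinarith
      dsimp only
      rcases he5 with h' | h'
      · -- q'.1 = 1 : f q' ≥ 0, f(leftPt) ≤ 0
        rw [h']; linarith
      · -- q'.2 = 1 (top edge)
        rw [h'] at hs2 ⊢
        -- hs2 : 1 - p'.2 ≤ σmax * (q'.1 - p'.1)
        have : σmax * (p.1 + (1 - p.2) / σmax) ≤ σmax * q'.1 := by nlinarith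
        have := (mul_le_mul_iff_right₀ hσ0).mp this
        linarith
  · push_neg at hc
    dsimp only
    rcases he5 with h' | h'
    · -- q'.1 = 1
      rw [h'] at hs2 ⊢
      nlinarith [mul_le_mul_of_nonneg_left he4 hσ]
    · -- q'.2 = 1 : impossible
      exfalso
      rw [h'] at hs2
      nlinarith [mul_le_mul_of_nonneg_left he2 hσ]

/-- Key upper-bound lemma: if `p ≼ p'` on the entry side, then every point of the
projection of `p` is `≼` the right point of `p'`'s projection. -/
lemma rightPt_ge {σmin σmax : ℝ} (h0 : 0 ≤ σmin) (h1 : σmin ≤ σmax) {p p' q : ℝ × ℝ}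
    (hp : p ∈ entrySide) (hp' : p' ∈ entrySide) (hf : p.1 - p.2 ≤ p'.1 - p'.2)
    (hq : q ∈ projCell σmin σmax p) :
    q.1 - q.2 ≤ (rightPt σmin p').1 - (rightPt σmin p').2 := by
  obtain ⟨hp1, hp2, hp3, hp4, _⟩ := entry_facts hp
  obtain ⟨hq1, hq2, hq3, hq4, _⟩ := entry_facts hp'
  rw [projCell_mem] at hq
  obtain ⟨hqe, hx, hy, hs1, hs2⟩ := hq
  obtain ⟨he1, he2, he3, he4, he5⟩ := exit_facts hqe
  have hg : σmin * p.1 - p.2 ≤ σmin * p'.1 - p'.2 := g_mono h0 hp hp' hf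
  rw [rightPt]
  split_ifs with hc
  · dsimp only
    rcases he5 with h' | h'
    · -- q.1 = 1
      rw [h'] at hs1
      nlinarith [mul_le_mul_of_nonneg_left he4 h0]
    · -- q.2 = 1 : f q ≤ 0 ≤ f(rightPt)
      rw [h']; linarith
  · push_neg at hc
    have hσ0 : 0 < σmin := by
      rcases h0.eq_or_lt with h | h
      · exfalso; rw [← h] at hc; nlinarith
      · exact h
    have ht : σmin * ((1 - p'.2) / σmin) = 1 - p'.2 := by field_simp
    dsimp only
    rcases he5 with h' | h'
    · -- q.1 = 1 : impossible
      exfalso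
      rw [h'] at hs1
      nlinarith [mul_le_mul_of_nonneg_left he2 h0]
    · -- q.2 = 1
      rw [h'] at hs1 ⊢
      have : σmin * q.1 ≤ σmin * (p'.1 + (1 - p'.2) / σmin) := by nlinarith
      have := (mul_le_mul_iff_right₀ hσ0).mp this
      linarith

lemma projSet_subset_exit {σmin σmax : ℝ} {S : Set (ℝ × ℝ)} :
    projSet σmin σmax S ⊆ exitSide := by
  intro q hq
  simp only [projSet, mem_iUnion] at hq
  obtain ⟨p, _, hq⟩ := hq
  exact (projCell_mem.mp hq).1

theorem proj_preserves_order (σmin σmax : ℝ) (h0 : 0 ≤ σmin) (h1 : σmin ≤ σmax)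
    (k : ℕ) (I : Fin k → Set (ℝ × ℝ)) (L R : Fin k → ℝ × ℝ)
    (hIE : ∀ i, I i ⊆ entrySide)
    (hL : ∀ i, L i ∈ I i) (hR : ∀ i, R i ∈ I i)
    (hLmin : ∀ i, ∀ p ∈ I i, pleq (L i) p) (hRmax : ∀ i, ∀ p ∈ I i, pleq p (R i))
    (hIint : ∀ i, ∀ x ∈ entrySide, pleq (L i) x → pleq x (R i) → x ∈ I i)
    (hord : ∀ i j : Fin k, i ≤ j → pleq (L i) (L j) ∧ pleq (R i) (R j))
    (L' R' : Fin k → ℝ × ℝ)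
    (hL' : ∀ i, L' i ∈ projSet σmin σmax (I i) ∧
      ∀ q ∈ projSet σmin σmax (I i), pleq (L' i) q)
    (hR' : ∀ i, R' i ∈ projSet σmin σmax (I i) ∧
      ∀ q ∈ projSet σmin σmax (I i), pleq q (R' i)) :
    ∀ i j : Fin k, i ≤ j → pleq (L' i) (L' j) ∧ pleq (R' i) (R' j) := by
  intro i j hij
  have hLiE : L i ∈ entrySide := hIE i (hL i)
  have hLjE : L j ∈ entrySide := hIE j (hL j)
  have hRiE : R i ∈ entrySide := hIE i (hR i)
  have hRjE : R j ∈ entrySide := hIE j (hR j)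
  have hLiex : L' i ∈ exitSide := projSet_subset_exit (hL' i).1
  have hLjex : L' j ∈ exitSide := projSet_subset_exit (hL' j).1
  have hRiex : R' i ∈ exitSide := projSet_subset_exit (hR' i).1
  have hRjex : R' j ∈ exitSide := projSet_subset_exit (hR' j).1
  constructor
  · -- L' i ≼ L' j
    obtain ⟨hmem, _⟩ := hL' j
    simp only [projSet, mem_iUnion] at hmem
    obtain ⟨p', hp'I, hq'⟩ := hmem
    have hp'E : p' ∈ entrySide := hIE j hp'I
    -- f (L i) ≤ f p'
    have h1' : pleq (L i) (L j) := (hord i j hij).1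
    have h2' : pleq (L j) p' := hLmin j p' hp'I
    have hf : (L i).1 - (L i).2 ≤ p'.1 - p'.2 := by
      have a := (pleq_iff_entry hLiE hLjE).mp h1'
      have b := (pleq_iff_entry hLjE hp'E).mp h2'
      linarith
    -- leftPt (L i) ∈ projSet (I i)
    have hmem' : leftPt σmax (L i) ∈ projSet σmin σmax (I i) := by
      simp only [projSet, mem_iUnion]
      exact ⟨L i, hL i, leftPt_mem h0 h1 hLiE⟩
    have hlb : pleq (L' i) (leftPt σmax (L i)) := (hL' i).2 _ hmem'
    have hlex : leftPt σmax (L i) ∈ exitSide := (projCell_mem.mp (leftPt_mem h0 h1 hLiE)).1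
    rw [pleq_iff_exit hLiex hLjex]
    have a := (pleq_iff_exit hLiex hlex).mp hlb
    have b := leftPt_le h0 h1 hLiE hp'E hf hq'
    linarith
  · -- R' i ≼ R' j
    obtain ⟨hmem, _⟩ := hR' i
    simp only [projSet, mem_iUnion] at hmem
    obtain ⟨p, hpI, hq⟩ := hmem
    have hpE : p ∈ entrySide := hIE i hpI
    have h1' : pleq p (R i) := hRmax i p hpI
    have h2' : pleq (R i) (R j) := (hord i j hij).2
    have hf : p.1 - p.2 ≤ (R j).1 - (R j).2 := by
      have a := (pleq_iff_entry hpE hRiE).mp h1'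
      have b := (pleq_iff_entry hRiE hRjE).mp h2'
      linarith
    have hmem' : rightPt σmin (R j) ∈ projSet σmin σmax (I j) := by
      simp only [projSet, mem_iUnion]
      exact ⟨R j, hR j, rightPt_mem h0 h1 hRjE⟩
    have hub : pleq (rightPt σmin (R j)) (R' j) := (hR' j).2 _ hmem'
    have hrex : rightPt σmin (R j) ∈ exitSide := (projCell_mem.mp (rightPt_mem h0 h1 hRjE)).1
    rw [pleq_iff_exit hRiex hRjex]
    have a := (pleq_iff_exit hrex hRjex).mp hub
    have b := rightPt_ge h0 h1 hpE hRjE hf hq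
    linarith
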